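/- Let K ⊂ ℂ be a bounded measurable set, let r > 0, let B = B(0,r) be the open disc of radius r centered at the origin, and let a < 3 be a real number. Then the function (x,y) ↦ 1_B(x) · 1_{ℂ∖B}(y) · |x−y|^{−a} is Lebesgue-integrable on K × K; equivalently, ∫_K ∫_K 1_B(x) 1_{ℂ∖B}(y) |x−y|^{−a} d²x d²y < ∞. -/

import Mathlib

open MeasureTheory Set Metric
open scoped ENNReal NNReal Real

lemma aux_one_dim {c : ℝ} (S : ℝ) (hc : -1 < c) :
    ∫⁻ t in Ioc (0:ℝ) S, ENNReal.ofReal (t ^ c) < ⊤ := by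
  rcases le_or_gt S 0 with h | h
  · rw [Ioc_eq_empty (by exact not_lt.2 h)]
    simp
  · have hInt : IntegrableOn (fun t : ℝ => t ^ c) (Ioc 0 S) := by
      have := intervalIntegral.intervalIntegrable_rpow' (a := 0) (b := S) hc
      rwa [intervalIntegrable_iff_integrableOn_Ioc_of_le h.le] at this
    exact hInt.lintegral_lt_top

lemma vol_bound {r : ℝ} (hr : 0 < r) (z : ℂ) :
    volume (closedBall (0:ℂ) r \ ball 0 (r - ‖z‖)) ≤ ENNReal.ofReal (2 * π * r * ‖z‖) := by
  have hz : (0:ℝ) ≤ ‖z‖ := norm_nonneg z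
  have hpi : (NNReal.pi : ℝ≥0∞) = ENNReal.ofReal π := by
    rw [← NNReal.coe_real_pi, ENNReal.ofReal_coe_nnreal]
  rcases le_or_gt r ‖z‖ with h | h
  · calc volume (closedBall (0:ℂ) r \ ball 0 (r - ‖z‖))
        ≤ volume (closedBall (0:ℂ) r) := measure_mono diff_subset
      _ = ENNReal.ofReal r ^ 2 * NNReal.pi := Complex.volume_closedBall 0 r
      _ = ENNReal.ofReal (r ^ 2 * π) := by
          rw [hpi, ← ENNReal.ofReal_pow hr.le, ← ENNReal.ofReal_mul (by positivity)]
      _ ≤ ENNReal.ofReal (2 * π * r * ‖z‖) := by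
          apply ENNReal.ofReal_le_ofReal
          nlinarith [Real.pi_pos, mul_nonneg (mul_nonneg Real.pi_pos.le hr.le)
            (by linarith : (0:ℝ) ≤ 2 * ‖z‖ - r)]
  · have hsub : ball (0:ℂ) (r - ‖z‖) ⊆ closedBall 0 r :=
      (ball_subset_ball (by linarith)).trans ball_subset_closedBall
    rw [measure_diff hsub measurableSet_ball.nullMeasurableSet measure_ball_lt_top.ne,
      Complex.volume_closedBall, Complex.volume_ball]
    have h1 : ∀ s : ℝ, 0 ≤ s → ENNReal.ofReal s ^ 2 * (NNReal.pi : ℝ≥0∞)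
        = ENNReal.ofReal (s ^ 2 * π) := by
      intro s hs
      rw [hpi, ← ENNReal.ofReal_pow hs, ← ENNReal.ofReal_mul (by positivity)]
    rw [h1 r hr.le, h1 (r - ‖z‖) (by linarith), ← ENNReal.ofReal_sub _ (by positivity)]
    apply ENNReal.ofReal_le_ofReal
    nlinarith [Real.pi_pos, sq_nonneg ‖z‖]

lemma aux_two_dim {b : ℝ} (S : ℝ) (hb : -2 < b) :
    ∫⁻ z in closedBall (0:ℂ) S, ENNReal.ofReal (‖z‖ ^ b) < ⊤ := by
  set g : ℝ → ℝ≥0∞ := fun t => (Iic S).indicator (fun t => ENNReal.ofReal (t ^ b)) t with hg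
  have hgm : Measurable g :=
    ((measurable_id.pow_const b).ennreal_ofReal).indicator measurableSet_Iic
  have step1 : ∫⁻ z in closedBall (0:ℂ) S, ENNReal.ofReal (‖z‖ ^ b) ∂volume
      ≤ ∫⁻ z : ℂ, g ‖z‖ ∂volume := by
    rw [← lintegral_indicator measurableSet_closedBall]
    apply lintegral_mono
    intro z
    by_cases hz : z ∈ closedBall (0:ℂ) S
    · rw [indicator_of_mem hz]
      have hzS : ‖z‖ ∈ Iic S := mem_closedBall_zero_iff.1 hz
      simp only [g, Set.indicator_apply, mem_Iic]
      rw [if_pos hzS.out]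
    · rw [indicator_of_notMem hz]; exact zero_le
  have mp := (volume : Measure ℂ).measurePreserving_homeomorphUnitSphereProd
  have e1 : ∫⁻ z : ℂ, g ‖z‖ ∂volume = ∫⁻ z in ({(0:ℂ)}ᶜ), g ‖z‖ ∂volume := by
    rw [MeasureTheory.restrict_compl_singleton]
  have e2 : ∫⁻ z in ({(0:ℂ)}ᶜ), g ‖z‖ ∂volume
      = ∫⁻ x : ({(0:ℂ)}ᶜ : Set ℂ), g ‖(x : ℂ)‖ ∂(volume.comap Subtype.val) :=
    (lintegral_subtype_comap (measurableSet_singleton 0).compl _).symm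
  have e3 : ∫⁻ x : ({(0:ℂ)}ᶜ : Set ℂ), g ‖(x : ℂ)‖ ∂(volume.comap Subtype.val)
      = ∫⁻ p : sphere (0:ℂ) 1 × Ioi (0:ℝ), g p.2
          ∂((volume : Measure ℂ).toSphere.prod
            (Measure.volumeIoiPow (Module.finrank ℝ ℂ - 1))) := by
    have := mp.lintegral_comp (f := fun p : sphere (0:ℂ) 1 × Ioi (0:ℝ) => g p.2)
      (hgm.comp (measurable_subtype_coe.comp measurable_snd))
    rw [← this]
    refine lintegral_congr fun x => ?_
    congr 1
    simp [homeomorphUnitSphereProd_apply_snd_coe]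
  have hfr : Module.finrank ℝ ℂ - 1 = 1 := by rw [Complex.finrank_real_complex]
  have e4 : ∫⁻ p : sphere (0:ℂ) 1 × Ioi (0:ℝ), g p.2
        ∂((volume : Measure ℂ).toSphere.prod
          (Measure.volumeIoiPow (Module.finrank ℝ ℂ - 1)))
      = (∫⁻ y : Ioi (0:ℝ), g y ∂(Measure.volumeIoiPow (Module.finrank ℝ ℂ - 1)))
        * (volume : Measure ℂ).toSphere univ := by
    have hmeas : Measurable fun p : sphere (0:ℂ) 1 × Ioi (0:ℝ) => g ↑p.2 :=
      hgm.comp (measurable_subtype_coe.comp measurable_snd)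
    rw [lintegral_prod _ hmeas.aemeasurable]
    simp only [lintegral_const]
  have e5 : ∫⁻ y : Ioi (0:ℝ), g y ∂(Measure.volumeIoiPow 1)
      = ∫⁻ t in Ioi (0:ℝ), ENNReal.ofReal (t ^ (1:ℕ)) * g t := by
    have hmeas2 : Measurable fun y : Ioi (0:ℝ) => g ↑y := hgm.comp measurable_subtype_coe
    have hd : Measurable fun r : Ioi (0:ℝ) => ENNReal.ofReal (r.1 ^ (1:ℕ)) :=
      (measurable_subtype_coe.pow_const _).ennreal_ofReal
    rw [Measure.volumeIoiPow, lintegral_withDensity_eq_lintegral_mul _ hd hmeas2]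
    exact lintegral_subtype_comap measurableSet_Ioi fun t => ENNReal.ofReal (t ^ (1:ℕ)) * g t
  have e6 : ∫⁻ t in Ioi (0:ℝ), ENNReal.ofReal (t ^ (1:ℕ)) * g t
      ≤ ∫⁻ t in Ioc (0:ℝ) S, ENNReal.ofReal (t ^ (b+1)) := by
    have hmono : ∀ t ∈ Ioi (0:ℝ), ENNReal.ofReal (t ^ (1:ℕ)) * g t
        ≤ (Ioc (0:ℝ) S).indicator (fun t => ENNReal.ofReal (t ^ (b+1))) t := by
      intro t ht
      have htpos : (0:ℝ) < t := ht
      by_cases hts : t ≤ S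
      · simp only [Set.indicator_apply, mem_Ioc, g, mem_Iic]
        rw [if_pos hts, if_pos (⟨htpos, hts⟩ : 0 < t ∧ t ≤ S)]
        rw [pow_one, ← ENNReal.ofReal_mul htpos.le]
        apply ENNReal.ofReal_le_ofReal
        rw [Real.rpow_add_one htpos.ne', mul_comm]
      · simp [g, Set.indicator_apply, hts, not_lt.2 (le_of_lt htpos)]
    calc ∫⁻ t in Ioi (0:ℝ), ENNReal.ofReal (t ^ (1:ℕ)) * g t
        ≤ ∫⁻ t in Ioi (0:ℝ),
            (Ioc (0:ℝ) S).indicator (fun t => ENNReal.ofReal (t ^ (b+1))) t :=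
          setLIntegral_mono
            (((measurable_id.pow_const _).ennreal_ofReal).indicator measurableSet_Ioc) hmono
      _ ≤ ∫⁻ t, (Ioc (0:ℝ) S).indicator (fun t => ENNReal.ofReal (t ^ (b+1))) t :=
          setLIntegral_le_lintegral _ _
      _ = _ := lintegral_indicator measurableSet_Ioc _
  have hfin : ∫⁻ z : ℂ, g ‖z‖ ∂volume < ⊤ := by
    rw [e1, e2, e3, e4, hfr, e5]
    exact ENNReal.mul_lt_top
      (lt_of_le_of_lt e6 (aux_one_dim S (by linarith)))
      (measure_lt_top _ _)
  exact lt_of_le_of_lt step1 hfin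

/-- **Integral lemma** (Lemma 3 of the paper). If `K ⊂ ℂ` is bounded and measurable,
`B = B(0,r)` with `r > 0`, and `a < 3`, then
`(x,y) ↦ 1_B(x) · 1_{ℂ∖B}(y) · |x−y|^{−a}` is Lebesgue-integrable on `K × K`. -/
theorem integral_lemma (K : Set ℂ) (hK : Bornology.IsBounded K) (hKm : MeasurableSet K)
    (r : ℝ) (hr : 0 < r) (a : ℝ) (ha : a < 3) :
    IntegrableOn
      (fun p : ℂ × ℂ =>
        (ball (0 : ℂ) r).indicator (1 : ℂ → ℝ) p.1 *
        ((ball (0 : ℂ) r)ᶜ).indicator (1 : ℂ → ℝ) p.2 *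
        ‖p.1 - p.2‖ ^ (-a))
      (K ×ˢ K) volume := by
  obtain ⟨R, hR0, hKR⟩ := hK.subset_closedBall_lt 0 0
  set A : Set ℂ := closedBall (0:ℂ) R ∩ (ball (0:ℂ) r)ᶜ with hA
  have hAm : MeasurableSet A := measurableSet_closedBall.inter measurableSet_ball.compl
  set f : ℂ × ℂ → ℝ := fun p =>
    (ball (0 : ℂ) r).indicator (1 : ℂ → ℝ) p.1 *
    ((ball (0 : ℂ) r)ᶜ).indicator (1 : ℂ → ℝ) p.2 * ‖p.1 - p.2‖ ^ (-a) with hf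
  have hfm : Measurable f :=
    (((measurable_one.indicator measurableSet_ball).comp measurable_fst).mul
      ((measurable_one.indicator measurableSet_ball.compl).comp measurable_snd)).mul
      ((measurable_fst.sub measurable_snd).norm.pow_const _)
  have hfnn : ∀ p, 0 ≤ f p := by
    intro p
    apply mul_nonneg (mul_nonneg ?_ ?_) (Real.rpow_nonneg (norm_nonneg _) _) <;>
      exact Set.indicator_nonneg (fun _ _ => zero_le_one) _
  set G : ℂ × ℂ → ℝ≥0∞ := fun p =>
    (ball (0:ℂ) r).indicator (fun _ => (1:ℝ≥0∞)) p.1 *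
    A.indicator (fun _ => (1:ℝ≥0∞)) p.2 *
    ENNReal.ofReal (‖p.1 - p.2‖ ^ (-a)) with hG
  have hGm : Measurable G :=
    (((measurable_const.indicator measurableSet_ball).comp measurable_fst).mul
      ((measurable_const.indicator hAm).comp measurable_snd)).mul
      (((measurable_fst.sub measurable_snd).norm.pow_const _).ennreal_ofReal)
  -- the global bound
  set Φ : ℂ → ℂ → ℝ≥0∞ := fun x z =>
    (ball (0:ℂ) r).indicator (fun _ => (1:ℝ≥0∞)) x *
    A.indicator (fun _ => (1:ℝ≥0∞)) (x + z) *
    ENNReal.ofReal (‖z‖ ^ (-a)) with hΦdef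
  have hΦm : Measurable (Function.uncurry Φ) :=
    (((measurable_const.indicator measurableSet_ball).comp measurable_fst).mul
      ((measurable_const.indicator hAm).comp (measurable_fst.add measurable_snd))).mul
      ((measurable_snd.norm.pow_const _).ennreal_ofReal)
  have hWm : MeasurableSet (closedBall (0:ℂ) r \ ball (0:ℂ) (r - ‖(0:ℂ)‖)) :=
    measurableSet_closedBall.diff measurableSet_ball
  have hx_bound : ∀ z : ℂ, (∫⁻ x, Φ x z) ≤
      (closedBall (0:ℂ) (R + r)).indicator (fun _ => (1:ℝ≥0∞)) z *
        (ENNReal.ofReal (2 * π * r * ‖z‖) * ENNReal.ofReal (‖z‖ ^ (-a))) := by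
    intro z
    set W : Set ℂ := closedBall (0:ℂ) r \ ball (0:ℂ) (r - ‖z‖) with hW
    have hWm : MeasurableSet W := measurableSet_closedBall.diff measurableSet_ball
    have hptx : ∀ x, Φ x z ≤
        (closedBall (0:ℂ) (R+r)).indicator (fun _ => (1:ℝ≥0∞)) z *
          W.indicator (fun _ => ENNReal.ofReal (‖z‖ ^ (-a))) x := by
      intro x
      by_cases h1 : x ∈ ball (0:ℂ) r
      · by_cases h2 : x + z ∈ A
        · have hxr : ‖x‖ < r := mem_ball_zero_iff.1 h1
          have hxzR : ‖x + z‖ ≤ R := mem_closedBall_zero_iff.1 h2.1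
          have hxznr : ¬ ‖x + z‖ < r := fun hc => h2.2 (mem_ball_zero_iff.2 hc)
          have hxW : x ∈ W := by
            constructor
            · exact mem_closedBall_zero_iff.2 hxr.le
            · intro hc
              have : ‖x‖ < r - ‖z‖ := mem_ball_zero_iff.1 hc
              exact hxznr (lt_of_le_of_lt (norm_add_le x z) (by linarith))
          have hzRr : z ∈ closedBall (0:ℂ) (R + r) := by
            apply mem_closedBall_zero_iff.2
            have : ‖z‖ ≤ ‖x + z‖ + ‖x‖ := by
              calc ‖z‖ = ‖x + z - x‖ := by ring_nf
              _ ≤ ‖x + z‖ + ‖x‖ := norm_sub_le _ _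
            linarith
          rw [hΦdef]
          simp only [indicator_of_mem h1, indicator_of_mem h2, indicator_of_mem hxW,
            indicator_of_mem hzRr, one_mul]
          exact le_rfl
        · simp [hΦdef, indicator_of_notMem h2]
      · simp [hΦdef, indicator_of_notMem h1]
    calc (∫⁻ x, Φ x z)
        ≤ ∫⁻ x, (closedBall (0:ℂ) (R+r)).indicator (fun _ => (1:ℝ≥0∞)) z *
            W.indicator (fun _ => ENNReal.ofReal (‖z‖ ^ (-a))) x := lintegral_mono hptx
      _ = (closedBall (0:ℂ) (R+r)).indicator (fun _ => (1:ℝ≥0∞)) z *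
            ∫⁻ x, W.indicator (fun _ => ENNReal.ofReal (‖z‖ ^ (-a))) x :=
          lintegral_const_mul _ (measurable_const.indicator hWm)
      _ = (closedBall (0:ℂ) (R+r)).indicator (fun _ => (1:ℝ≥0∞)) z *
            (ENNReal.ofReal (‖z‖ ^ (-a)) * volume W) := by
          rw [lintegral_indicator_const hWm]
      _ ≤ _ := by
          apply mul_le_mul_right
          rw [mul_comm]
          exact mul_le_mul' (vol_bound hr z) le_rfl
  -- the final integral bound
  have hGtop : ∫⁻ p : ℂ × ℂ, G p < ⊤ := by
    rw [Measure.volume_eq_prod, lintegral_prod _ hGm.aemeasurable]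
    have inner : ∀ x : ℂ, (∫⁻ y, G (x, y)) = ∫⁻ z, Φ x z := by
      intro x
      rw [← lintegral_add_left_eq_self (fun y => G (x, y)) x]
      refine lintegral_congr fun z => ?_
      simp only [hG, hΦdef]
      rw [show x - (x + z) = -z by ring, norm_neg]
    calc ∫⁻ x, ∫⁻ y, G (x, y)
        = ∫⁻ x, ∫⁻ z, Φ x z := by exact lintegral_congr inner
      _ = ∫⁻ z, ∫⁻ x, Φ x z := lintegral_lintegral_swap hΦm.aemeasurable
      _ ≤ ∫⁻ z, (closedBall (0:ℂ) (R + r)).indicator (fun _ => (1:ℝ≥0∞)) z *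
            (ENNReal.ofReal (2 * π * r * ‖z‖) * ENNReal.ofReal (‖z‖ ^ (-a))) :=
          lintegral_mono hx_bound
      _ ≤ ∫⁻ z, (closedBall (0:ℂ) (R + r)).indicator
            (fun z => ENNReal.ofReal (2 * π * r) * ENNReal.ofReal (‖z‖ ^ (1 - a))) z := by
          apply lintegral_mono
          intro z
          dsimp only
          by_cases hz : z ∈ closedBall (0:ℂ) (R + r)
          · rw [indicator_of_mem hz, indicator_of_mem hz, one_mul]
            rw [← ENNReal.ofReal_mul (by positivity), ← ENNReal.ofReal_mul (by positivity)]
            apply ENNReal.ofReal_le_ofReal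
            rcases eq_or_ne z 0 with h0 | h0
            · simp only [h0, norm_zero, mul_zero, zero_mul]
              positivity
            · have hz0 : (0:ℝ) < ‖z‖ := norm_pos_iff.2 h0
              have : ‖z‖ * ‖z‖ ^ (-a) = ‖z‖ ^ (1 - a) := by
                rw [sub_eq_add_neg, Real.rpow_add hz0, Real.rpow_one]
              rw [mul_assoc, this]
          · rw [indicator_of_notMem hz, indicator_of_notMem hz, zero_mul]
      _ = ENNReal.ofReal (2 * π * r) *
            ∫⁻ z in closedBall (0:ℂ) (R + r), ENNReal.ofReal (‖z‖ ^ (1 - a)) := by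
          rw [lintegral_indicator measurableSet_closedBall,
            lintegral_const_mul _ ((measurable_norm.pow_const _).ennreal_ofReal)]
      _ < ⊤ := ENNReal.mul_lt_top ENNReal.ofReal_lt_top (aux_two_dim (R + r) (by linarith))
  constructor
  · exact hfm.aestronglyMeasurable
  · rw [hasFiniteIntegral_iff_ofReal (ae_of_all _ hfnn)]
    have hpt : ∀ p ∈ K ×ˢ K, ENNReal.ofReal (f p) ≤ G p := by
      rintro ⟨x, y⟩ ⟨hx, hy⟩
      by_cases h1 : x ∈ ball (0:ℂ) r
      · by_cases h2 : y ∈ (ball (0:ℂ) r)ᶜ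
        · have hyA : y ∈ A := ⟨hKR hy, h2⟩
          simp only [hf, hG, indicator_of_mem h1, indicator_of_mem h2, indicator_of_mem hyA,
            Pi.one_apply, one_mul]
          exact le_rfl
        · simp [hf, hG, indicator_of_notMem h2]
      · simp [hf, hG, indicator_of_notMem h1]
    calc ∫⁻ p in K ×ˢ K, ENNReal.ofReal (f p)
        ≤ ∫⁻ p in K ×ˢ K, G p := setLIntegral_mono hGm hpt
      _ ≤ ∫⁻ p, G p := setLIntegral_le_lintegral _ _
      _ < ⊤ := hGtop
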